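/- arXiv:1707.01267 — 3 statements merged into one kernel-verified Lean document; each statement's English description precedes it below -/
import Mathlib

section
/- Let 𝔛 be a classical configuration in which every edge colour other than a single colour ∅ is nonempty (at most one outgoing edge of each such colour from each vertex), and let Γ_𝔛 be the graph on Γ whose edges are the nonempty-coloured pairs. If Γ_𝔛 is connected, then the number WL(𝔛) of nontrivial iterations of the Weisfeiler–Leman algorithm satisfies WL(𝔛) ≤ log₂(diam Γ_𝔛) + 3. -/
/-!
Suppose `(v, w)` and `(u, u')` have the same colour after `g + 1` rounds, where
`2 ^ g > 2 · diam Γ_𝔛`. The intersection numbers of round `g` transport every walk of length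
at most `2 ^ g` with a given colour sequence from `v` to `w` into one from `u` to `u'`, and the
round-`g` colours of `(v, v)` and `(u, u)` agree. Fix for each `x` a walk of length at most the
diameter from `v` to `x` along nonempty colours and let `φ x` be the end of the walk from `u` with
the same colours: it exists because the closed walk there and back transports to `u`, and it is
unique because nonempty colours are functional. Transporting the closed walk `v → x → y → v` shows
that `φ` preserves `c`, so, reflexive colours being confined to the diagonal, `φ` is an
automorphism of `𝔛` mapping `(v, w)` to `(u, u')`. Hence the colouring is stable from round
`⌊log₂ diam⌋ + 3` on.
-/

universe u v

/-- The type of colours after `k` Weisfeiler-Leman iterations. -/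
def WLColor (C : Type v) : ℕ → Type v
  | 0 => C
  | k + 1 => WLColor C k × (WLColor C k → WLColor C k → ℕ)

/-- The Weisfeiler-Leman iterated colouring. -/
noncomputable def WLiter {Γ : Type u} {C : Type v} (c : Γ → Γ → C) :
    (k : ℕ) → Γ → Γ → WLColor C k
  | 0 => c
  | k + 1 => fun v₁ v₂ =>
      (WLiter c k v₁ v₂,
        fun c₁ c₂ => Nat.card {w : Γ // WLiter c k v₁ w = c₁ ∧ WLiter c k w v₂ = c₂})

/-- The number of nontrivial Weisfeiler-Leman iterations: the first `k` at which
the step `k → k+1` does not refine the partition of `Γ × Γ`. -/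
noncomputable def WLnum {Γ : Type u} {C : Type v} (c : Γ → Γ → C) : ℕ :=
  sInf {k | ∀ v₁ v₂ u₁ u₂ : Γ,
    WLiter c (k + 1) v₁ v₂ = WLiter c (k + 1) u₁ u₂ ↔
      WLiter c k v₁ v₂ = WLiter c k u₁ u₂}

/-- A colour is nonempty if each vertex has at most one outgoing edge of that colour. -/
def NonemptyColor {Γ : Type u} {C : Type v} (c : Γ → Γ → C) (c₀ : C) : Prop :=
  ∀ v w w' : Γ, c v w = c₀ → c v w' = c₀ → w = w'

/-- Existence of a directed walk of length `n`. -/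
def dWalk {Γ : Type u} (R : Γ → Γ → Prop) : ℕ → Γ → Γ → Prop
  | 0, v, w => v = w
  | n + 1, v, w => ∃ u, R v u ∧ dWalk R n u w

/-- Directed graph distance. -/
noncomputable def ddist {Γ : Type u} (R : Γ → Γ → Prop) (v w : Γ) : ℕ :=
  sInf {n | dWalk R n v w}

/-- Diameter of a directed graph. -/
noncomputable def ddiam {Γ : Type u} (R : Γ → Γ → Prop) : ℕ :=
  sSup (Set.range fun p : Γ × Γ => ddist R p.1 p.2)

/-- `ColorWalk c x y cs ws` means `ws` is the list of intermediate vertices of a walk from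
`x` to `y` whose consecutive edges have the colours listed in `cs`. -/
def ColorWalk {Γ : Type u} {C : Type v} (c : Γ → Γ → C) :
    Γ → Γ → List C → List Γ → Prop
  | x, y, [d], [] => c x y = d
  | x, y, d :: ds, u :: us => c x u = d ∧ ColorWalk c u y ds us
  | _, _, _, _ => False

open Function

section ColorWalks

variable {Γ : Type u} {C : Type v} (c : Γ → Γ → C)

def HasColorWalk : List C → Γ → Γ → Prop
  | [], v, w => v = w
  | d :: ds, v, w => ∃ x, c v x = d ∧ HasColorWalk ds x w

namespace HasColorWalk

variable {c}

theorem append_iff {ds es : List C} {v w : Γ} :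
    HasColorWalk c (ds ++ es) v w ↔ ∃ x, HasColorWalk c ds v x ∧ HasColorWalk c es x w := by
  induction ds generalizing v with
  | nil => simp [HasColorWalk]
  | cons d ds ih =>
    simp only [List.cons_append, HasColorWalk, ih]
    exact ⟨fun ⟨z, hz, x, h₁, h₂⟩ => ⟨x, ⟨z, hz, h₁⟩, h₂⟩,
      fun ⟨x, ⟨z, hz, h₁⟩, h₂⟩ => ⟨z, hz, x, h₁, h₂⟩⟩

theorem unique {ds : List C} (hds : ∀ d ∈ ds, NonemptyColor c d) {v x y : Γ}
    (hx : HasColorWalk c ds v x) (hy : HasColorWalk c ds v y) : x = y := by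
  induction ds generalizing v with
  | nil => exact hx.symm.trans hy
  | cons d ds ih =>
    obtain ⟨a, ha, hx⟩ := hx
    obtain ⟨b, hb, hy⟩ := hy
    obtain rfl := hds d List.mem_cons_self v a b ha hb
    exact ih (fun e he => hds e (List.mem_cons_of_mem _ he)) hx hy

theorem exists_of_mem {ds : List C} {v w : Γ} (h : HasColorWalk c ds v w) :
    ∀ d ∈ ds, ∃ a b, c a b = d := by
  induction ds generalizing v with
  | nil => simp
  | cons e ds ih =>
    obtain ⟨x, hx, h⟩ := h
    rintro d (_ | ⟨_, hd⟩)
    · exact ⟨v, x, hx⟩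
    · exact ih h d hd

variable {r : C → C} (hr : ∀ a b, c b a = r (c a b))
include hr

theorem reverse {ds : List C} {v w : Γ} (h : HasColorWalk c ds v w) :
    HasColorWalk c (ds.map r).reverse w v := by
  induction ds generalizing v with
  | nil => exact h.symm
  | cons d ds ih =>
    obtain ⟨x, rfl, h⟩ := h
    simpa only [List.map_cons, List.reverse_cons, append_iff]
      using ⟨x, ih h, v, hr v x, rfl⟩

theorem of_reverse {ds : List C} {v w x y : Γ} (h : HasColorWalk c ds v w)
    (h' : HasColorWalk c (ds.map r).reverse x y) : HasColorWalk c ds y x := by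
  -- `r` need only be an involution on the colours that occur, such as those of `ds`.
  have hinv : ds.map (r ∘ r) = ds.map id := List.map_congr_left fun d hd => by
    obtain ⟨a, b, rfl⟩ := h.exists_of_mem d hd
    simp only [comp_apply, id, ← hr]
  simpa [List.map_reverse, List.map_map, hinv] using h'.reverse hr

end HasColorWalk

end ColorWalks

section WeisfeilerLeman

variable {Γ : Type u} {C : Type v} (c : Γ → Γ → C)

theorem WLiter_eq_of_succ_eq {k : ℕ} {v w u₁ u₂ : Γ}
    (h : WLiter c (k + 1) v w = WLiter c (k + 1) u₁ u₂) : WLiter c k v w = WLiter c k u₁ u₂ :=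
  congrArg Prod.fst h

theorem eq_of_WLiter_eq {v w u₁ u₂ : Γ} :
    ∀ {k : ℕ}, WLiter c k v w = WLiter c k u₁ u₂ → c v w = c u₁ u₂
  | 0, h => h
  | _ + 1, h => eq_of_WLiter_eq (WLiter_eq_of_succ_eq c h)

theorem WLnum_le {k : ℕ} (h : ∀ v w u₁ u₂ : Γ,
    WLiter c k v w = WLiter c k u₁ u₂ → WLiter c (k + 1) v w = WLiter c (k + 1) u₁ u₂) :
    WLnum c ≤ k :=
  Nat.sInf_le fun v w u₁ u₂ => ⟨WLiter_eq_of_succ_eq c, h v w u₁ u₂⟩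

theorem WLiter_map_eq {φ : Γ → Γ} (hφ : Bijective φ) (hc : ∀ a b, c (φ a) (φ b) = c a b) :
    ∀ k a b, WLiter c k (φ a) (φ b) = WLiter c k a b
  | 0 => hc
  | k + 1 => fun a b => by
    have ih := WLiter_map_eq hφ hc k
    refine Prod.ext (ih a b) (funext₂ fun c₁ c₂ => ?_)
    exact (Nat.card_congr ((Equiv.ofBijective φ hφ).subtypeEquiv fun x => by simp [ih])).symm

variable [Finite Γ]

theorem exists_WLiter_eq_of_succ_eq {k : ℕ} {v w u₁ u₂ : Γ}
    (h : WLiter c (k + 1) v w = WLiter c (k + 1) u₁ u₂) (x : Γ) :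
    ∃ y, WLiter c k u₁ y = WLiter c k v x ∧ WLiter c k y u₂ = WLiter c k x w := by
  have hcount :
      Nat.card {y // WLiter c k v y = WLiter c k v x ∧ WLiter c k y w = WLiter c k x w} =
        Nat.card {y // WLiter c k u₁ y = WLiter c k v x ∧ WLiter c k y u₂ = WLiter c k x w} :=
    congrFun₂ (congrArg Prod.snd h) _ _
  have : Nonempty {y // WLiter c k v y = WLiter c k v x ∧ WLiter c k y w = WLiter c k x w} :=
    ⟨⟨x, rfl, rfl⟩⟩
  obtain ⟨⟨y, hy⟩⟩ := (Nat.card_pos_iff.mp (hcount ▸ Nat.card_pos)).1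
  exact ⟨y, hy⟩

variable {c} (hdiag : ∀ v a b : Γ, c a b = c v v → a = b)
include hdiag

theorem WLiter_diag_eq_of_succ_eq {k : ℕ} {v w u₁ u₂ : Γ}
    (h : WLiter c (k + 1) v w = WLiter c (k + 1) u₁ u₂) : WLiter c k v v = WLiter c k u₁ u₁ := by
  obtain ⟨y, hy, -⟩ := exists_WLiter_eq_of_succ_eq c h v
  obtain rfl := hdiag v u₁ y (eq_of_WLiter_eq c hy)
  exact hy.symm

theorem HasColorWalk.of_WLiter_eq :
    ∀ (k : ℕ) {ds : List C}, ds.length ≤ 2 ^ k → ∀ {v w u₁ u₂ : Γ},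
      WLiter c k v w = WLiter c k u₁ u₂ → HasColorWalk c ds v w → HasColorWalk c ds u₁ u₂
  | 0, [], _, v, _, u₁, u₂, h, rfl => hdiag v u₁ u₂ h.symm
  | 0, [_], _, _, _, _, u₂, h, ⟨_, hx, rfl⟩ => ⟨u₂, (h.symm.trans hx :), rfl⟩
  | 0, _ :: _ :: _, hlen, _, _, _, _, _, _ => by simp at hlen
  | k + 1, ds, hlen, v, w, u₁, u₂, h, hw => by
    rw [pow_succ] at hlen
    rw [← List.take_append_drop (2 ^ k) ds, append_iff] at hw ⊢
    obtain ⟨x, hvx, hxw⟩ := hw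
    obtain ⟨y, hy₁, hy₂⟩ := exists_WLiter_eq_of_succ_eq c h x
    refine ⟨y, of_WLiter_eq k ?_ hy₁.symm hvx, of_WLiter_eq k ?_ hy₂.symm hxw⟩
    · simp
    · rw [List.length_drop]
      omega

end WeisfeilerLeman

section Automorphism

variable {Γ : Type u} {C : Type v} {c : Γ → Γ → C} [Finite Γ]
  (hdiag : ∀ v a b : Γ, c a b = c v v → a = b)
include hdiag

theorem exists_color_preserving_of_WLiter_eq {r : C → C} (hr : ∀ a b, c b a = r (c a b))
    {D g : ℕ} (hg : 2 * D + 1 ≤ 2 ^ g)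
    {v w u u' : Γ} (hwalk : ∀ x, ∃ ds : List C,
      ds.length ≤ D ∧ (∀ d ∈ ds, NonemptyColor c d) ∧ HasColorWalk c ds v x)
    (hvv : WLiter c g v v = WLiter c g u u) (hvw : WLiter c g v w = WLiter c g u u') :
    ∃ φ : Γ → Γ, φ v = u ∧ φ w = u' ∧ ∀ x y, c (φ x) (φ y) = c x y := by
  choose ds hlen hcol hds using hwalk
  have transfer {es : List C} (hes : es.length ≤ 2 * D + 1) {a b a' b' : Γ}
      (h : WLiter c g a b = WLiter c g a' b') : HasColorWalk c es a b → HasColorWalk c es a' b' :=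
    HasColorWalk.of_WLiter_eq hdiag g (hes.trans hg) h
  have hφ (x : Γ) : ∃ x', HasColorWalk c (ds x) u x' := by
    have hloop : HasColorWalk c (ds x ++ (ds x |>.map r).reverse) v v :=
      HasColorWalk.append_iff.mpr ⟨x, hds x, (hds x).reverse hr⟩
    have hlen : (ds x ++ (ds x |>.map r).reverse).length ≤ 2 * D + 1 := by
      simp only [List.length_append, List.length_reverse, List.length_map]
      linarith [hlen x]
    obtain ⟨x', hx', -⟩ := HasColorWalk.append_iff.mp (transfer hlen hvv hloop)
    exact ⟨x', hx'⟩
  choose φ hφ using hφ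
  have huniq (x a : Γ) (ha : HasColorWalk c (ds x) u a) : a = φ x := ha.unique (hcol x) (hφ x)
  refine ⟨φ, (huniq v u (transfer (by linarith [hlen v]) hvv (hds v))).symm,
    (huniq w u' (transfer (by linarith [hlen w]) hvw (hds w))).symm, fun x y => ?_⟩
  have hloop : HasColorWalk c (ds x ++ c x y :: (ds y |>.map r).reverse) v v :=
    HasColorWalk.append_iff.mpr ⟨x, hds x, y, rfl, (hds y).reverse hr⟩
  have hlen : (ds x ++ c x y :: (ds y |>.map r).reverse).length ≤ 2 * D + 1 := by
    simp only [List.length_append, List.length_cons, List.length_reverse, List.length_map]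
    linarith [hlen x, hlen y]
  obtain ⟨a, ha, b, hab, hb⟩ := HasColorWalk.append_iff.mp (transfer hlen hvv hloop)
  rwa [huniq x a ha, huniq y b ((hds y).of_reverse hr hb)] at hab

theorem bijective_of_color_preserving {φ : Γ → Γ}
    (hφ : ∀ x y, c (φ x) (φ y) = c x y) : Bijective φ :=
  Finite.injective_iff_bijective.mp fun x y hxy =>
    hdiag x x y (by rw [← hφ x y, ← hxy, hφ])

end Automorphism

section Stabilization

variable {Γ : Type u} {C : Type v} {c : Γ → Γ → C} [Finite Γ]
  (hdiag : ∀ v a b : Γ, c a b = c v v → a = b) {r : C → C} (hr : ∀ a b, c b a = r (c a b))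
  {D : ℕ} (hwalk : ∀ v x, ∃ ds : List C,
    ds.length ≤ D ∧ (∀ d ∈ ds, NonemptyColor c d) ∧ HasColorWalk c ds v x)
include hdiag hr hwalk

theorem WLiter_eq_of_succ_eq_of_diam_lt {g : ℕ} (hg : 2 * D + 1 ≤ 2 ^ g) {v w u u' : Γ}
    (h : WLiter c (g + 1) v w = WLiter c (g + 1) u u') (k : ℕ) :
    WLiter c k v w = WLiter c k u u' := by
  obtain ⟨φ, rfl, rfl, hφ⟩ := exists_color_preserving_of_WLiter_eq hdiag hr hg (hwalk v)
    (WLiter_diag_eq_of_succ_eq hdiag h) (WLiter_eq_of_succ_eq c h)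
  exact (WLiter_map_eq c (bijective_of_color_preserving hdiag hφ) hφ k v w).symm

theorem WLnum_le_log_add_three : WLnum c ≤ Nat.log 2 D + 3 := by
  have hg : 2 * D + 1 ≤ 2 ^ (Nat.log 2 D + 2) := by
    have := Nat.lt_pow_succ_log_self one_lt_two D
    rw [pow_succ]
    omega
  exact WLnum_le c fun v w u u' h => WLiter_eq_of_succ_eq_of_diam_lt hdiag hr hwalk hg h _

end Stabilization

section Connectivity

variable {Γ : Type u} {C : Type v}

theorem exists_hasColorWalk_of_dWalk {c : Γ → Γ → C} {R : Γ → Γ → Prop} (hR : ∀ v w, R v w ↔ NonemptyColor c (c v w)) :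
    ∀ {n : ℕ} {v w : Γ}, dWalk R n v w →
      ∃ ds : List C, ds.length = n ∧ (∀ d ∈ ds, NonemptyColor c d) ∧ HasColorWalk c ds v w
  | 0, _, _, h => ⟨[], rfl, by simp, h⟩
  | _ + 1, v, _, ⟨x, hvx, h⟩ =>
    let ⟨ds, hlen, hcol, hds⟩ := exists_hasColorWalk_of_dWalk hR h
    ⟨c v x :: ds, by simp [hlen], by simpa [(hR v x).mp hvx] using hcol, x, rfl, hds⟩

theorem ddist_le_ddiam [Finite Γ] (R : Γ → Γ → Prop) (v w : Γ) : ddist R v w ≤ ddiam R :=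
  le_csSup (Set.finite_range _).bddAbove ⟨(v, w), rfl⟩

end Connectivity

theorem WL_upper_bound_general {Γ : Type u} {C : Type v} [Finite Γ] (c : Γ → Γ → C)
    (hi : ∀ (c₀ : C) (v : Γ), c v v = c₀ → ∀ v₁ v₂ : Γ, c v₁ v₂ = c₀ → v₁ = v₂)
    (hii : ∀ c₀ : C, ∃ c₀' : C, ∀ v₁ v₂ : Γ, c v₁ v₂ = c₀ → c v₂ v₁ = c₀')
    (R : Γ → Γ → Prop) (hR : ∀ v w : Γ, R v w ↔ NonemptyColor c (c v w))
    (hconn : ∀ v w : Γ, ∃ n : ℕ, dWalk R n v w) :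
    (WLnum c : ℝ) ≤ Real.logb 2 (ddiam R) + 3 := by
  choose r hr using hii
  have hwalk (v x : Γ) : ∃ ds : List C,
      ds.length ≤ ddiam R ∧ (∀ d ∈ ds, NonemptyColor c d) ∧ HasColorWalk c ds v x :=
    let ⟨ds, hlen, hcol, hds⟩ := exists_hasColorWalk_of_dWalk hR (Nat.sInf_mem (hconn v x))
    ⟨ds, hlen ▸ ddist_le_ddiam R v x, hcol, hds⟩
  have hWL := WLnum_le_log_add_three (fun v a b h => hi _ v rfl a b h) (fun a b => hr _ a b rfl)
    hwalk
  calc (WLnum c : ℝ) ≤ (Nat.log 2 (ddiam R) : ℕ) + 3 := by exact_mod_cast hWL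
    _ ≤ Real.logb 2 (ddiam R) + 3 := by
      gcongr
      exact_mod_cast Real.natLog_le_logb _ 2

/-- Upper bound on the number of nontrivial Weisfeiler-Leman iterations for a classical
configuration all of whose colours except possibly one distinguished colour are nonempty:
`WL(𝔛) ≤ log₂ (diam Γ_𝔛) + 3`. -/
theorem WL_upper_bound {Γ : Type u} {C : Type v} [Finite Γ] (c : Γ → Γ → C)
    (hi : ∀ (c₀ : C) (v : Γ), c v v = c₀ → ∀ v₁ v₂ : Γ, c v₁ v₂ = c₀ → v₁ = v₂)
    (hii : ∀ c₀ : C, ∃ c₀' : C, ∀ v₁ v₂ : Γ, c v₁ v₂ = c₀ → c v₂ v₁ = c₀')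
    (emp : C) (hne : ∀ c₀ : C, c₀ ≠ emp → NonemptyColor c c₀)
    (R : Γ → Γ → Prop) (hR : ∀ v w : Γ, R v w ↔ NonemptyColor c (c v w))
    (hconn : ∀ v w : Γ, ∃ n : ℕ, dWalk R n v w) :
    (WLnum c : ℝ) ≤ Real.logb 2 (ddiam R) + 3 :=
  WL_upper_bound_general c hi hii R hR hconn
end

section
/- Let 𝔛 be a classical configuration with exactly one empty colour, with Γ_𝔛 connected, and suppose there exists a nontrivial automorphism φ of 𝔛 all of whose nontrivial powers are fixed-point-free; choose such φ with |⟨φ⟩| minimal. Then WL(𝔛) ≥ log₂(diam Γ_𝔛) − log₂(|⟨φ⟩| − 1) − 3. -/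
universe u v

/-!
Let `G = ⟨φ⟩` and `k = WL(𝔛)`. By induction on `j`, if `v` is at distance more than `2 ^ j` from
the whole `G`-orbit of `w`, then the `j`-th colouring does not distinguish `(v, w)` from `(v, g w)`
for `g ∈ G`: the bijection needed in the counting step from `j` to `j + 1` applies `g` on the
`2 ^ j`-neighbourhood of the orbit and fixes everything else. The stable colouring, however,
separates the endpoints of walks out of a fixed vertex, because nonempty colours are functional;
so every vertex lies within `2 ^ k` of every `G`-orbit.
If no `1 ≠ g ∈ G` moved `y` by at most `2 · 2 ^ k + 1`, the element of `G` carrying a vertex into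
the `2 ^ k`-ball around `y` would be unique and constant along edges; it is `1` at `y` and `φ⁻¹`
at `φ y`, a contradiction. Minimality makes `|G|` a prime `p`, so every element of `G` is a power
`g ^ t` with `t < p`, and the diameter is at most `(p - 1) · 2 ^ (k + 2)`.
-/

def colorAut {Γ : Type*} {C : Type*} (c : Γ → Γ → C) : Subgroup (Equiv.Perm Γ) where
  carrier := {ψ | ∀ v w, c (ψ v) (ψ w) = c v w}
  mul_mem' hψ hχ v w := (hψ _ _).trans (hχ v w)
  one_mem' _ _ := rfl
  inv_mem' {ψ} hψ v w := by simpa using (hψ (ψ⁻¹ v) (ψ⁻¹ w)).symm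

theorem colorAut_le_colorAut_of_iff {Γ : Type*} {C : Type*} {c : Γ → Γ → C}
    {R : Γ → Γ → Prop} {P : C → Prop} (hR : ∀ v w, R v w ↔ P (c v w)) :
    colorAut c ≤ colorAut R :=
  fun _ hψ v w => propext (by rw [hR, hR, hψ])

section Walks

variable {Γ : Type*} {R : Γ → Γ → Prop}

theorem dWalk_add {m n : ℕ} {a b e : Γ} (hab : dWalk R m a b) (hbe : dWalk R n b e) :
    dWalk R (m + n) a e := by
  induction m generalizing a with
  | zero => cases hab; simpa using hbe
  | succ m ih =>
    obtain ⟨u, hau, hub⟩ := hab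
    rw [Nat.add_right_comm]
    exact ⟨u, hau, ih hub⟩

theorem dWalk_apply_apply_iff {ψ : Equiv.Perm Γ} (hψ : ψ ∈ colorAut R) {n : ℕ} {a b : Γ} :
    dWalk R n (ψ a) (ψ b) ↔ dWalk R n a b := by
  induction n generalizing a with
  | zero => exact ψ.injective.eq_iff
  | succ n ih =>
    refine ⟨fun ⟨u, hau, hub⟩ => ⟨ψ⁻¹ u, ?_, ?_⟩, fun ⟨u, hau, hub⟩ => ⟨ψ u, ?_, ih.2 hub⟩⟩
    · rwa [← hψ, ← Equiv.Perm.mul_apply, mul_inv_cancel, Equiv.Perm.one_apply]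
    · exact ih.1 (by simpa using hub)
    · rwa [hψ a u]

theorem ddist_le_of_dWalk {n : ℕ} {a b : Γ} (h : dWalk R n a b) : ddist R a b ≤ n :=
  Nat.sInf_le h

theorem dWalk_ddist {a b : Γ} (h : ∃ n, dWalk R n a b) : dWalk R (ddist R a b) a b :=
  Nat.sInf_mem h

theorem ddist_self (a : Γ) : ddist R a a = 0 :=
  Nat.le_zero.mp (ddist_le_of_dWalk (n := 0) rfl)

theorem ddist_le_one {a b : Γ} (h : R a b) : ddist R a b ≤ 1 :=
  ddist_le_of_dWalk ⟨b, h, rfl⟩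

theorem ddist_triangle (hconn : ∀ v w, ∃ n, dWalk R n v w) (a b e : Γ) :
    ddist R a e ≤ ddist R a b + ddist R b e :=
  ddist_le_of_dWalk (dWalk_add (dWalk_ddist (hconn a b)) (dWalk_ddist (hconn b e)))

theorem ddist_apply_apply {ψ : Equiv.Perm Γ} (hψ : ψ ∈ colorAut R) (a b : Γ) :
    ddist R (ψ a) (ψ b) = ddist R a b := by
  simp only [ddist, dWalk_apply_apply_iff hψ]

theorem ddist_pow_apply_le (hconn : ∀ v w, ∃ n, dWalk R n v w) {g : Equiv.Perm Γ}
    (hg : g ∈ colorAut R) (y : Γ) (t : ℕ) : ddist R y ((g ^ t) y) ≤ t * ddist R y (g y) := by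
  induction t with
  | zero => simp [ddist_self]
  | succ t ih =>
    calc ddist R y ((g ^ (t + 1)) y)
        ≤ ddist R y (g y) + ddist R (g y) (g ((g ^ t) y)) := by
          rw [pow_succ', Equiv.Perm.mul_apply]; exact ddist_triangle hconn _ _ _
      _ ≤ (t + 1) * ddist R y (g y) := by rw [ddist_apply_apply hg]; linarith

end Walks

section WeisfeilerLeman

variable {Γ : Type*} {C : Type*} {c : Γ → Γ → C}

def WLStable (c : Γ → Γ → C) (k : ℕ) : Prop :=
  ∀ v₁ v₂ u₁ u₂ : Γ,
    WLiter c (k + 1) v₁ v₂ = WLiter c (k + 1) u₁ u₂ ↔ WLiter c k v₁ v₂ = WLiter c k u₁ u₂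

theorem WLiter_eq_of_succ {k : ℕ} {a b a' b' : Γ}
    (h : WLiter c (k + 1) a b = WLiter c (k + 1) a' b') : WLiter c k a b = WLiter c k a' b' :=
  congrArg Prod.fst h

theorem eq_of_WLiter_eq_s13 {k : ℕ} {a b a' b' : Γ} (h : WLiter c k a b = WLiter c k a' b') :
    c a b = c a' b' := by
  induction k with
  | zero => exact h
  | succ k ih => exact ih (WLiter_eq_of_succ h)

theorem WLiter_succ_eq_of_perm {k : ℕ} {a b a' b' : Γ} (h : WLiter c k a b = WLiter c k a' b')
    (σ : Equiv.Perm Γ)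
    (hσ : ∀ u, WLiter c k a' (σ u) = WLiter c k a u ∧ WLiter c k (σ u) b' = WLiter c k u b) :
    WLiter c (k + 1) a b = WLiter c (k + 1) a' b' :=
  Prod.ext h <| funext₂ fun _ _ => Nat.card_congr <| σ.subtypeEquiv fun u => by
    rw [(hσ u).1, (hσ u).2]

theorem exists_WLiter_eq_of_succ [Finite Γ] {k : ℕ} {a b a' b' : Γ}
    (h : WLiter c (k + 1) a b = WLiter c (k + 1) a' b') (u : Γ) :
    ∃ u', WLiter c k a' u' = WLiter c k a u ∧ WLiter c k u' b' = WLiter c k u b := by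
  have hcard : Nat.card {w // WLiter c k a w = WLiter c k a u ∧ WLiter c k w b = WLiter c k u b}
      = Nat.card {w // WLiter c k a' w = WLiter c k a u ∧ WLiter c k w b' = WLiter c k u b} :=
    congrFun₂ (congrArg Prod.snd h) _ _
  have : Nonempty {w // WLiter c k a w = WLiter c k a u ∧ WLiter c k w b = WLiter c k u b} :=
    ⟨⟨u, rfl, rfl⟩⟩
  obtain ⟨⟨u', hu'⟩⟩ := (Nat.card_pos_iff.mp (hcard ▸ Nat.card_pos)).1
  exact ⟨u', hu'⟩

theorem colorAut_le_colorAut_WLiter (k : ℕ) : colorAut c ≤ colorAut (WLiter c k) := by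
  intro ψ hψ
  induction k with
  | zero => exact hψ
  | succ k ih => exact fun a b =>
    (WLiter_succ_eq_of_perm (ih a b).symm ψ fun u => ⟨ih a u, ih u b⟩).symm

theorem exists_WLStable [Finite Γ] (c : Γ → Γ → C) : ∃ k, WLStable c k := by
  by_contra! hunstable
  let kernel : ℕ → Γ × Γ → Γ × Γ → Prop := fun k p q => WLiter c k p.1 p.2 = WLiter c k q.1 q.2
  have hanti : StrictAnti kernel := strictAnti_nat_of_succ_lt fun k =>
    lt_of_le_of_ne (fun _ _ => WLiter_eq_of_succ) fun heq =>
      hunstable k fun v₁ v₂ u₁ u₂ => iff_of_eq (congrFun₂ heq (v₁, v₂) (u₁, u₂))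
  exact not_injective_infinite_finite kernel hanti.injective

theorem WLStable_WLnum [Finite Γ] (c : Γ → Γ → C) : WLStable c (WLnum c) :=
  Nat.sInf_mem (exists_WLStable c)

theorem eq_of_WLiter_eq_of_dWalk [Finite Γ] {R : Γ → Γ → Prop} {k : ℕ} (hk : WLStable c k)
    (hdiag : ∀ v v₁ v₂, c v₁ v₂ = c v v → v₁ = v₂)
    (hR : ∀ v w, R v w → NonemptyColor c (c v w)) {n : ℕ} {v w w' : Γ} (hvw : dWalk R n v w)
    (h : WLiter c k v w = WLiter c k v w') : w = w' := by
  induction n generalizing v with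
  | zero =>
    subst hvw
    exact hdiag _ _ _ (eq_of_WLiter_eq_s13 h).symm
  | succ n ih =>
    obtain ⟨u, hvu, huw⟩ := hvw
    obtain ⟨u', hvu', hu'w'⟩ := exists_WLiter_eq_of_succ ((hk v w v w').2 h) u
    obtain rfl : u' = u := hR v u hvu v u' u (eq_of_WLiter_eq_s13 hvu') rfl
    exact ih huw hu'w'.symm

end WeisfeilerLeman

section Orbits

variable {Γ : Type*} {C : Type*} {c : Γ → Γ → C} {R : Γ → Γ → Prop} {G : Subgroup (Equiv.Perm Γ)}

theorem WLiter_apply_eq_of_far {emp : C} (hemp : ∀ v w, ¬R v w → c v w = emp)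
    (hconn : ∀ v w, ∃ n, dWalk R n v w) (hGc : G ≤ colorAut c) (hGR : G ≤ colorAut R)
    (j : ℕ) {v w : Γ} (hfar : ∀ h ∈ G, 2 ^ j < ddist R v (h w)) {g : Equiv.Perm Γ}
    (hg : g ∈ G) : WLiter c j v (g w) = WLiter c j v w := by
  induction j generalizing v w g with
  | zero =>
    have hnotR : ∀ h ∈ G, ¬R v (h w) := fun h hh hR =>
      (hfar h hh).not_ge (by simpa using ddist_le_one hR)
    exact (hemp _ _ (hnotR g hg)).trans (hemp _ _ (hnotR 1 G.one_mem)).symm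
  | succ j ih =>
    classical
    have hfar' : ∀ h ∈ G, 2 ^ j < ddist R v (h w) := fun h hh =>
      (Nat.pow_le_pow_right two_pos j.le_succ).trans_lt (hfar h hh)
    let near : Γ → Prop := fun u => ∃ h ∈ G, ddist R u (h w) ≤ 2 ^ j
    have hnear : ∀ u, near (g u) ↔ near u := fun u =>
      ⟨fun ⟨h, hh, hu⟩ => ⟨g⁻¹ * h, mul_mem (inv_mem hg) hh, by
          rwa [← ddist_apply_apply (hGR hg), Equiv.Perm.mul_apply, ← Equiv.Perm.mul_apply g,
            mul_inv_cancel, Equiv.Perm.one_apply]⟩,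
        fun ⟨h, hh, hu⟩ => ⟨g * h, mul_mem hg hh, by
          rwa [Equiv.Perm.mul_apply, ddist_apply_apply (hGR hg)]⟩⟩
    refine (WLiter_succ_eq_of_perm (ih hfar' hg).symm
      (Equiv.Perm.ofSubtype (g.subtypePerm hnear)) fun u => ?_).symm
    by_cases hu : near u
    · rw [Equiv.Perm.ofSubtype_apply_of_mem _ hu, Equiv.Perm.subtypePerm_apply]
      refine ⟨ih (fun h hh => ?_) hg, colorAut_le_colorAut_WLiter j (hGc hg) u w⟩
      show 2 ^ j < ddist R v (h u)
      obtain ⟨h₀, hh₀, hu₀⟩ := hu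
      have htri := ddist_triangle hconn v (h u) (h (h₀ w))
      rw [ddist_apply_apply (hGR hh)] at htri
      have := hfar (h * h₀) (mul_mem hh hh₀)
      rw [Equiv.Perm.mul_apply, pow_succ] at this
      omega
    · rw [Equiv.Perm.ofSubtype_apply_of_not_mem _ hu]
      exact ⟨rfl, ih (fun h hh => not_le.mp fun hle => hu ⟨h, hh, hle⟩) hg⟩

theorem exists_mem_ddist_le_two_pow [Finite Γ] {k : ℕ} (hk : WLStable c k)
    (hdiag : ∀ v v₁ v₂, c v₁ v₂ = c v v → v₁ = v₂) (hRc : ∀ v w, R v w → NonemptyColor c (c v w))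
    {emp : C} (hemp : ∀ v w, ¬R v w → c v w = emp) (hconn : ∀ v w, ∃ n, dWalk R n v w)
    (hGc : G ≤ colorAut c) (hGR : G ≤ colorAut R) {g : Equiv.Perm Γ} (hg : g ∈ G) {w : Γ}
    (hgw : g w ≠ w) (v : Γ) : ∃ h ∈ G, ddist R v (h w) ≤ 2 ^ k := by
  by_contra! hfar
  obtain ⟨n, hn⟩ := hconn v w
  exact hgw (eq_of_WLiter_eq_of_dWalk hk hdiag hRc hn
    (WLiter_apply_eq_of_far hemp hconn hGc hGR k hfar hg).symm).symm

end Orbits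

section Diameter

variable {Γ : Type*} {R : Γ → Γ → Prop} {G : Subgroup (Equiv.Perm Γ)} {D : ℕ} {y : Γ}

theorem eq_of_ddist_le_one (hconn : ∀ v w, ∃ n, dWalk R n v w) (hGR : G ≤ colorAut R)
    (hnear : ∀ v w, ∃ g ∈ G, ddist R v (g w) ≤ D)
    (hsep : ∀ g ∈ G, ddist R y (g y) ≤ 2 * D + 1 → g = 1) {u u' : Γ} (huu' : ddist R u u' ≤ 1)
    {g g' : Equiv.Perm Γ} (hg : g ∈ G) (hg' : g' ∈ G) (hgu : ddist R y (g u) ≤ D)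
    (hg'u' : ddist R y (g' u') ≤ D) : g = g' := by
  obtain ⟨b, hb, hbu'⟩ := hnear u' y
  have hinv : ∀ h ∈ G, ddist R y (h u') ≤ D + 1 → h * b = 1 := fun h hh hhu' =>
    hsep _ (mul_mem hh hb) <| by
      calc ddist R y ((h * b) y) ≤ ddist R y (h u') + ddist R (h u') (h (b y)) :=
            ddist_triangle hconn _ _ _
        _ ≤ 2 * D + 1 := by rw [ddist_apply_apply (hGR hh)]; omega
  have hgu' : ddist R y (g u') ≤ D + 1 := by
    have := ddist_triangle hconn y (g u) (g u')
    rw [ddist_apply_apply (hGR hg)] at this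
    omega
  exact mul_right_cancel ((hinv g hg hgu').trans (hinv g' hg' (by omega)).symm)

theorem eq_of_dWalk (hconn : ∀ v w, ∃ n, dWalk R n v w) (hGR : G ≤ colorAut R)
    (hnear : ∀ v w, ∃ g ∈ G, ddist R v (g w) ≤ D)
    (hsep : ∀ g ∈ G, ddist R y (g y) ≤ 2 * D + 1 → g = 1) {n : ℕ} {u u' : Γ}
    (huu' : dWalk R n u u') {g g' : Equiv.Perm Γ} (hg : g ∈ G) (hg' : g' ∈ G)
    (hgu : ddist R y (g u) ≤ D) (hg'u' : ddist R y (g' u') ≤ D) : g = g' := by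
  induction n generalizing u g with
  | zero =>
    subst huu'
    exact eq_of_ddist_le_one hconn hGR hnear hsep (by rw [ddist_self]; omega) hg hg' hgu hg'u'
  | succ n ih =>
    obtain ⟨u₁, hu, hu₁⟩ := huu'
    obtain ⟨g₁, hg₁, hg₁u₁⟩ := hnear y u₁
    exact (eq_of_ddist_le_one hconn hGR hnear hsep (ddist_le_one hu) hg hg₁ hgu hg₁u₁).trans
      (ih hu₁ hg₁ hg₁u₁)

theorem exists_ne_one_ddist_le (hconn : ∀ v w, ∃ n, dWalk R n v w) (hGR : G ≤ colorAut R)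
    (hnear : ∀ v w, ∃ g ∈ G, ddist R v (g w) ≤ D) (hG : G ≠ ⊥) (y : Γ) :
    ∃ g ∈ G, g ≠ 1 ∧ ddist R y (g y) ≤ 2 * D + 1 := by
  by_contra! hfar
  obtain ⟨φ, hφ, hφ1⟩ := G.bot_or_exists_ne_one.resolve_left hG
  obtain ⟨n, hn⟩ := hconn y (φ y)
  have hsep : ∀ g ∈ G, ddist R y (g y) ≤ 2 * D + 1 → g = 1 := fun g hg hle =>
    by_contra fun hg1 => (hfar g hg hg1).not_ge hle
  refine hφ1 (inv_eq_one.mp (eq_of_dWalk hconn hGR hnear hsep hn G.one_mem (inv_mem hφ) ?_ ?_).symm)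
  all_goals simp [ddist_self]

theorem exists_pow_eq_of_prime_card {H : Type*} [Group H] (hp : (Nat.card H).Prime) {g : H}
    (hg : g ≠ 1) (h : H) : ∃ t < Nat.card H, g ^ t = h := by
  classical
  have : Fact (Nat.card H).Prime := ⟨hp⟩
  have : Finite H := Nat.finite_of_card_ne_zero hp.ne_zero
  have hh : h ∈ Subgroup.zpowers g := zpowers_eq_top_of_prime_card rfl hg ▸ Subgroup.mem_top h
  obtain ⟨t, ht, hgt⟩ := Finset.mem_image.mp (mem_zpowers_iff_mem_range_orderOf.mp hh)
  exact ⟨t, (Finset.mem_range.mp ht).trans_le (Nat.le_of_dvd Nat.card_pos (orderOf_dvd_natCard g)),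
    hgt⟩

theorem ddist_apply_le_of_prime_card (hconn : ∀ v w, ∃ n, dWalk R n v w) (hGR : G ≤ colorAut R)
    (hp : (Nat.card G).Prime) {g h : Equiv.Perm Γ} (hg : g ∈ G) (hg1 : g ≠ 1) (hh : h ∈ G) :
    ddist R y (h y) ≤ (Nat.card G - 1) * ddist R y (g y) := by
  obtain ⟨t, ht, hgt⟩ := exists_pow_eq_of_prime_card hp (g := ⟨g, hg⟩)
    (by simpa [Subgroup.mk_eq_one] using hg1) ⟨h, hh⟩
  obtain rfl : g ^ t = h := congrArg Subtype.val hgt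
  exact (ddist_pow_apply_le hconn (hGR hg) y t).trans (Nat.mul_le_mul_right _ (by omega))

theorem ddiam_le_of_prime_card (hconn : ∀ v w, ∃ n, dWalk R n v w) (hGR : G ≤ colorAut R)
    (hp : (Nat.card G).Prime) (hnear : ∀ v w, ∃ g ∈ G, ddist R v (g w) ≤ D) :
    ddiam R ≤ D + (Nat.card G - 1) * (2 * D + 1) := by
  have hG : G ≠ ⊥ := fun hbot => hp.ne_one (by rw [hbot, Subgroup.card_bot])
  refine csSup_le' ?_
  rintro _ ⟨⟨x, y⟩, rfl⟩
  obtain ⟨g, hg, hxy⟩ := hnear x y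
  obtain ⟨e, he, he1, hey⟩ := exists_ne_one_ddist_le hconn hGR hnear hG y
  have hback : ddist R (g y) y ≤ (Nat.card G - 1) * (2 * D + 1) := by
    calc ddist R (g y) y = ddist R y (g⁻¹ y) := by
          rw [← ddist_apply_apply (hGR hg) y, ← Equiv.Perm.mul_apply, mul_inv_cancel,
            Equiv.Perm.one_apply]
      _ ≤ (Nat.card G - 1) * ddist R y (e y) :=
          ddist_apply_le_of_prime_card hconn hGR hp he he1 (inv_mem hg)
      _ ≤ (Nat.card G - 1) * (2 * D + 1) := Nat.mul_le_mul_left _ hey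
  exact (ddist_triangle hconn x (g y) y).trans (by omega)

end Diameter

theorem prime_orderOf_of_minimal {M : Type*} [Monoid M] {x : M} (hx : IsOfFinOrder x)
    (hx1 : x ≠ 1) (hmin : ∀ n : ℕ, x ^ n ≠ 1 → orderOf x ≤ orderOf (x ^ n)) :
    (orderOf x).Prime := by
  have hord1 : orderOf x ≠ 1 := by rwa [Ne, orderOf_eq_one_iff]
  have hp := Nat.minFac_prime hord1
  have hq : orderOf (x ^ (orderOf x / (orderOf x).minFac)) = (orderOf x).minFac :=
    orderOf_pow_orderOf_div hx.orderOf_pos.ne' (Nat.minFac_dvd _)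
  have hle := hmin _ fun h1 => hp.ne_one (by rw [← hq, h1, orderOf_one])
  rw [hq] at hle
  exact le_antisymm (Nat.minFac_le hx.orderOf_pos) hle ▸ hp

theorem logb_sub_logb_le {D m : ℝ} {n : ℕ} (hD : 0 ≤ D) (hm : 1 ≤ m) (h : D ≤ m * 2 ^ n) :
    Real.logb 2 D - Real.logb 2 m ≤ n := by
  rcases hD.eq_or_lt with rfl | hD
  · rw [Real.logb_zero]
    linarith [Real.logb_nonneg one_lt_two hm, (n.cast_nonneg : (0 : ℝ) ≤ n)]
  calc Real.logb 2 D - Real.logb 2 m ≤ Real.logb 2 (m * 2 ^ n) - Real.logb 2 m :=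
        sub_le_sub_right (Real.logb_le_logb_of_le one_lt_two hD h) _
    _ = n := by
        rw [Real.logb_mul (by positivity) (by positivity), Real.logb_pow,
          Real.logb_self_eq_one one_lt_two]
        ring

theorem WL_lower_bound_general {Γ : Type u} {C : Type v} [Finite Γ] (c : Γ → Γ → C)
    (hi : ∀ (c₀ : C) (v : Γ), c v v = c₀ → ∀ v₁ v₂ : Γ, c v₁ v₂ = c₀ → v₁ = v₂)
    (emp : C)
    (hne : ∀ c₀ : C, c₀ ≠ emp → NonemptyColor c c₀)
    (R : Γ → Γ → Prop) (hR : ∀ v w : Γ, R v w ↔ NonemptyColor c (c v w))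
    (hconn : ∀ v w : Γ, ∃ n : ℕ, dWalk R n v w)
    (φ : Equiv.Perm Γ) (hφ1 : φ ≠ 1)
    (hφc : ∀ v w : Γ, c (φ v) (φ w) = c v w)
    (hffp : ∀ i : ℤ, φ ^ i ≠ 1 → ∀ v : Γ, (φ ^ i) v ≠ v)
    (hmin : ∀ ψ : Equiv.Perm Γ, ψ ≠ 1 → (∀ v w : Γ, c (ψ v) (ψ w) = c v w) →
      (∀ i : ℤ, ψ ^ i ≠ 1 → ∀ v : Γ, (ψ ^ i) v ≠ v) → orderOf φ ≤ orderOf ψ) :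
    Real.logb 2 (ddiam R) - Real.logb 2 ((orderOf φ : ℝ) - 1) - 3 ≤ (WLnum c : ℝ) := by
  have hφc : φ ∈ colorAut c := hφc
  have hGc : Subgroup.zpowers φ ≤ colorAut c := Subgroup.zpowers_le.mpr hφc
  have hGR : Subgroup.zpowers φ ≤ colorAut R := hGc.trans (colorAut_le_colorAut_of_iff hR)
  have hp : (orderOf φ).Prime := prime_orderOf_of_minimal (isOfFinOrder_of_finite φ) hφ1
    fun n hn => hmin _ hn (pow_mem hφc n) fun i hi v => by
      rw [← zpow_natCast, ← zpow_mul] at hi ⊢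
      exact hffp _ hi v
  have hnear (v w : Γ) : ∃ g ∈ Subgroup.zpowers φ, ddist R v (g w) ≤ 2 ^ WLnum c :=
    exists_mem_ddist_le_two_pow (WLStable_WLnum c) (fun v _ _ h => hi _ v rfl _ _ h)
      (fun v w => (hR v w).1) (fun v w hvw => by_contra fun h => hvw ((hR v w).2 (hne _ h)))
      hconn hGc hGR (Subgroup.mem_zpowers φ) (by simpa using hffp 1 (by simpa using hφ1) w) v
  have hdiam := ddiam_le_of_prime_card hconn hGR (Nat.card_zpowers φ ▸ hp) hnear
  rw [Nat.card_zpowers] at hdiam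
  have hq : 1 ≤ orderOf φ - 1 := by have := hp.two_le; omega
  have hdiam' : ddiam R ≤ (orderOf φ - 1) * 2 ^ (WLnum c + 2) := by
    have hH := Nat.one_le_two_pow (n := WLnum c)
    rw [pow_add]
    nlinarith [Nat.mul_le_mul hq hH]
  have hlog := logb_sub_logb_le (Nat.cast_nonneg _) (by exact_mod_cast hq)
    (by exact_mod_cast hdiam' : (ddiam R : ℝ) ≤ ((orderOf φ - 1 : ℕ) : ℝ) * 2 ^ (WLnum c + 2))
  rw [Nat.cast_sub hp.one_le, Nat.cast_one] at hlog
  push_cast at hlog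
  linarith

/-- Lower bound on the number of nontrivial Weisfeiler-Leman iterations:
`WL(𝔛) ≥ log₂ (diam Γ_𝔛) − log₂(|⟨φ⟩| − 1) − 3` for a fixed-point-free automorphism `φ`
of minimal order. -/
theorem WL_lower_bound {Γ : Type u} {C : Type v} [Finite Γ] (c : Γ → Γ → C)
    (hi : ∀ (c₀ : C) (v : Γ), c v v = c₀ → ∀ v₁ v₂ : Γ, c v₁ v₂ = c₀ → v₁ = v₂)
    (hii : ∀ c₀ : C, ∃ c₀' : C, ∀ v₁ v₂ : Γ, c v₁ v₂ = c₀ → c v₂ v₁ = c₀')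
    (emp : C) (hempty : ¬ NonemptyColor c emp)
    (hne : ∀ c₀ : C, c₀ ≠ emp → NonemptyColor c c₀)
    (R : Γ → Γ → Prop) (hR : ∀ v w : Γ, R v w ↔ NonemptyColor c (c v w))
    (hconn : ∀ v w : Γ, ∃ n : ℕ, dWalk R n v w)
    (φ : Equiv.Perm Γ) (hφ1 : φ ≠ 1)
    (hφc : ∀ v w : Γ, c (φ v) (φ w) = c v w)
    (hffp : ∀ i : ℤ, φ ^ i ≠ 1 → ∀ v : Γ, (φ ^ i) v ≠ v)
    (hmin : ∀ ψ : Equiv.Perm Γ, ψ ≠ 1 → (∀ v w : Γ, c (ψ v) (ψ w) = c v w) →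
      (∀ i : ℤ, ψ ^ i ≠ 1 → ∀ v : Γ, (ψ ^ i) v ≠ v) → orderOf φ ≤ orderOf ψ) :
    Real.logb 2 (ddiam R) - Real.logb 2 ((orderOf φ : ℝ) - 1) - 3 ≤ (WLnum c : ℝ) :=
  WL_lower_bound_general c hi emp hne R hR hconn φ hφ1 hφc hffp hmin
end

section
/- Let 𝔛_C be the Cayley configuration of Cay(G,S). Then WL(𝔛_C) = ⌈log₂(diam Cay(G,S) − 1)⌉ if for every g ∈ G there is exactly one g' with d(g,g') = diam Cay(G,S), and WL(𝔛_C) = ⌈log₂(diam Cay(G,S))⌉ otherwise. -/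
universe u v

section Walks

variable {Γ : Type u} {R : Γ → Γ → Prop}

lemma dWalk_trans : ∀ {m n : ℕ} {v u w : Γ}, dWalk R m v u → dWalk R n u w →
    dWalk R (m + n) v w := by
  intro m
  induction m with
  | zero => intro n v u w h1 h2; cases h1; simpa using h2
  | succ m ih =>
    rintro n v u w ⟨z, hz, hw⟩ h2
    rw [Nat.succ_add]
    exact ⟨z, hz, ih hw h2⟩

lemma dWalk_split : ∀ {m n : ℕ} {v w : Γ}, dWalk R (m + n) v w →
    ∃ u, dWalk R m v u ∧ dWalk R n u w := by
  intro m
  induction m with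
  | zero => intro n v w h; exact ⟨v, rfl, by simpa using h⟩
  | succ m ih =>
    intro n v w h
    rw [Nat.succ_add] at h
    obtain ⟨z, hz, hw⟩ := h
    obtain ⟨u, h1, h2⟩ := ih hw
    exact ⟨u, ⟨z, hz, h1⟩, h2⟩

lemma dWalk_succ (hrefl : ∀ g, R g g) : ∀ {n : ℕ} {v w : Γ}, dWalk R n v w →
    dWalk R (n + 1) v w := by
  intro n
  induction n with
  | zero => intro v w h; cases h; exact ⟨v, hrefl v, rfl⟩
  | succ n ih => rintro v w ⟨u, hu, hw⟩; exact ⟨u, hu, ih hw⟩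

lemma dWalk_mono (hrefl : ∀ g, R g g) {m n : ℕ} (hmn : m ≤ n) {v w : Γ}
    (h : dWalk R m v w) : dWalk R n v w := by
  induction n with
  | zero => cases Nat.le_zero.mp hmn; exact h
  | succ n ih =>
    rcases Nat.lt_or_ge m (n+1) with h' | h'
    · exact dWalk_succ hrefl (ih (Nat.lt_succ_iff.mp h'))
    · cases le_antisymm hmn h'; exact h

lemma dWalk_snoc : ∀ {n : ℕ} {v u w : Γ}, dWalk R n v u → R u w → dWalk R (n + 1) v w := by
  intro n
  induction n with
  | zero => intro v u w h1 h2; cases h1; exact ⟨w, h2, rfl⟩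
  | succ n ih => rintro v u w ⟨z, hz, hw⟩ h2; exact ⟨z, hz, ih hw h2⟩

lemma dWalk_symm (hsymm : ∀ g h, R g h → R h g) :
    ∀ {n : ℕ} {v w : Γ}, dWalk R n v w → dWalk R n w v := by
  intro n
  induction n with
  | zero => intro v w h; exact h.symm
  | succ n ih => rintro v w ⟨u, hu, hw⟩; exact dWalk_snoc (ih hw) (hsymm _ _ hu)

end Walks

section Cayley

variable {G : Type*} [Group G] [Finite G] {S : Set G} {R : G → G → Prop}
variable (he : (1 : G) ∈ S) (hinv : S⁻¹ = S)
variable (hgen : Subgroup.closure S = ⊤)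
variable (hR : ∀ g h : G, R g h ↔ ∃ s ∈ S, h = s * g)

set_option linter.unusedSectionVars false

include he hinv hgen hR

lemma R_iff (g h : G) : R g h ↔ h * g⁻¹ ∈ S := by
  rw [hR]
  constructor
  · rintro ⟨s, hs, rfl⟩; simpa using hs
  · intro hs; exact ⟨h * g⁻¹, hs, by group⟩

lemma R_refl (g : G) : R g g := by rw [R_iff he hinv hgen hR]; simpa using he

lemma R_symm (g h : G) (hgh : R g h) : R h g := by
  rw [R_iff he hinv hgen hR] at hgh ⊢
  rw [← hinv]
  simpa using hgh

lemma dWalk_translate {n : ℕ} {v w : G} (k : G) (h : dWalk R n v w) :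
    dWalk R n (v * k) (w * k) := by
  induction n generalizing v with
  | zero => cases h; rfl
  | succ n ih =>
    obtain ⟨u, hu, hw⟩ := h
    refine ⟨u * k, ?_, ih hw⟩
    rw [R_iff he hinv hgen hR] at hu ⊢
    simpa [mul_assoc] using hu

lemma exists_dWalk (x : G) : ∃ n, dWalk R n 1 x := by
  have hx : x ∈ Subgroup.closure S := hgen ▸ Subgroup.mem_top x
  induction hx using Subgroup.closure_induction with
  | mem s hs => exact ⟨1, s, by rw [R_iff he hinv hgen hR]; simpa using hs, rfl⟩
  | one => exact ⟨0, rfl⟩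
  | mul a b _ _ ha hb =>
    obtain ⟨m, hm⟩ := ha
    obtain ⟨n, hn⟩ := hb
    exact ⟨n + m, dWalk_trans hn (by simpa using dWalk_translate he hinv hgen hR b hm)⟩
  | inv a _ ha =>
    obtain ⟨m, hm⟩ := ha
    refine ⟨m, ?_⟩
    have := dWalk_translate he hinv hgen hR a⁻¹ (dWalk_symm (R_symm he hinv hgen hR) hm)
    simpa using this

lemma ddist_le_iff {x : G} {n : ℕ} : ddist R 1 x ≤ n ↔ dWalk R n 1 x := by
  constructor
  · intro h
    have hne : {m | dWalk R m 1 x}.Nonempty := exists_dWalk he hinv hgen hR x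
    have := Nat.sInf_mem hne
    exact dWalk_mono (R_refl he hinv hgen hR) h this
  · intro h
    exact Nat.sInf_le h

lemma dWalk_ddist_s17 (x : G) : dWalk R (ddist R 1 x) 1 x :=
  (ddist_le_iff he hinv hgen hR).mp le_rfl

lemma ddist_one_mem {x : G} : x ∈ S ↔ ddist R 1 x ≤ 1 := by
  rw [ddist_le_iff he hinv hgen hR]
  constructor
  · intro hx; exact ⟨x, by rw [R_iff he hinv hgen hR]; simpa using hx, rfl⟩
  · rintro ⟨u, hu, rfl⟩; rw [R_iff he hinv hgen hR] at hu; simpa using hu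

lemma ddist_triangle_s17 (x y : G) : ddist R 1 (y * x) ≤ ddist R 1 y + ddist R 1 x := by
  rw [ddist_le_iff he hinv hgen hR, add_comm]
  exact dWalk_trans (dWalk_ddist_s17 he hinv hgen hR x)
    (by simpa using dWalk_translate he hinv hgen hR x (dWalk_ddist_s17 he hinv hgen hR y))

lemma ddist_inv (x : G) : ddist R 1 x⁻¹ = ddist R 1 x := by
  have key : ∀ z : G, ddist R 1 z⁻¹ ≤ ddist R 1 z := by
    intro z
    rw [ddist_le_iff he hinv hgen hR]
    have := dWalk_translate he hinv hgen hR z⁻¹ (dWalk_symm (R_symm he hinv hgen hR) (dWalk_ddist_s17 he hinv hgen hR z))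
    simpa using this
  exact le_antisymm (by simpa using key x) (by simpa using key x⁻¹)

lemma ddist_sub (x a : G) : ddist R 1 x ≤ ddist R 1 (x * a⁻¹) + ddist R 1 a := by
  have := ddist_triangle_s17 he hinv hgen hR a (x * a⁻¹)
  simpa using this

lemma ddist_split {x : G} {m n : ℕ} (h : ddist R 1 x ≤ m + n) :
    ∃ a, ddist R 1 a ≤ m ∧ ddist R 1 (x * a⁻¹) ≤ n := by
  rw [ddist_le_iff he hinv hgen hR] at h
  obtain ⟨u, h1, h2⟩ := dWalk_split h
  refine ⟨u, (ddist_le_iff he hinv hgen hR).mpr h1, ?_⟩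
  rw [ddist_le_iff he hinv hgen hR]
  simpa using dWalk_translate he hinv hgen hR u⁻¹ h2

lemma ddist_exists_eq {x : G} {m : ℕ} (h : m ≤ ddist R 1 x) :
    ∃ z, ddist R 1 z = m := by
  obtain ⟨a, ha1, ha2⟩ := ddist_split he hinv hgen hR
    (show ddist R 1 x ≤ m + (ddist R 1 x - m) by omega)
  refine ⟨a, le_antisymm ha1 ?_⟩
  have := ddist_sub he hinv hgen hR x a
  omega

lemma ddist_eq (g h : G) : ddist R g h = ddist R 1 (h * g⁻¹) := by
  unfold ddist
  congr 1
  ext n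
  constructor
  · intro hw; simpa using dWalk_translate he hinv hgen hR g⁻¹ hw
  · intro hw; simpa using dWalk_translate he hinv hgen hR g hw

end Cayley

section WL

variable {G : Type*} [Group G] [Finite G] {S : Set G}
variable (c : G → G → Option G)
variable (hc1 : ∀ g₁ g₂ : G, g₂ * g₁⁻¹ ∈ S → c g₁ g₂ = some (g₂ * g₁⁻¹))
variable (hc2 : ∀ g₁ g₂ : G, g₂ * g₁⁻¹ ∉ S → c g₁ g₂ = none)

set_option linter.unusedSectionVars false

include hc1 hc2

lemma WLiter_translate : ∀ (k : ℕ) (g₁ g₂ h : G),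
    WLiter c k (g₁ * h) (g₂ * h) = WLiter c k g₁ g₂ := by
  intro k
  induction k with
  | zero =>
    intro g₁ g₂ h
    show c (g₁ * h) (g₂ * h) = c g₁ g₂
    have key : (g₂ * h) * (g₁ * h)⁻¹ = g₂ * g₁⁻¹ := by group
    by_cases hs : g₂ * g₁⁻¹ ∈ S
    · rw [hc1 _ _ (key ▸ hs : (g₂*h) * (g₁*h)⁻¹ ∈ S), hc1 _ _ hs, key]
    · rw [hc2 _ _ (key ▸ hs : ¬ (g₂*h) * (g₁*h)⁻¹ ∈ S), hc2 _ _ hs]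
  | succ k ih =>
    intro g₁ g₂ h
    show (⟨_, _⟩ : WLColor (Option G) k × (WLColor (Option G) k → WLColor (Option G) k → ℕ)) = ⟨_, _⟩
    rw [Prod.mk.injEq]
    refine ⟨ih g₁ g₂ h, ?_⟩
    funext c₁ c₂
    refine Nat.card_congr (Equiv.subtypeEquiv (Equiv.mulRight h⁻¹) fun w => ?_)
    have e1 : WLiter c k g₁ (w * h⁻¹) = WLiter c k (g₁ * h) w := by
      have := ih g₁ (w * h⁻¹) h
      simpa using this.symm
    have e2 : WLiter c k (w * h⁻¹) g₂ = WLiter c k w (g₂ * h) := by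
      have := ih (w * h⁻¹) g₂ h
      simpa using this.symm
    simp only [Equiv.coe_mulRight, e1, e2]

lemma WLiter_conj (k : ℕ) (v₁ v₂ : G) :
    WLiter c k v₁ v₂ = WLiter c k 1 (v₂ * v₁⁻¹) := by
  have := WLiter_translate c hc1 hc2 k v₁ v₂ v₁⁻¹
  simpa using this.symm

end WL
section Main

variable {G : Type*} [Group G] [Finite G] {S : Set G} {R : G → G → Prop}
variable {c : G → G → Option G}
variable (he : (1 : G) ∈ S) (hinv : S⁻¹ = S)
variable (hgen : Subgroup.closure S = ⊤)
variable (hc1 : ∀ g₁ g₂ : G, g₂ * g₁⁻¹ ∈ S → c g₁ g₂ = some (g₂ * g₁⁻¹))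
variable (hc2 : ∀ g₁ g₂ : G, g₂ * g₁⁻¹ ∉ S → c g₁ g₂ = none)
variable (hR : ∀ g h : G, R g h ↔ ∃ s ∈ S, h = s * g)

set_option linter.unusedSectionVars false

include he hinv hgen hc1 hc2 hR

lemma WL_main : ∀ (k : ℕ) (x y : G),
    WLiter c k 1 x = WLiter c k 1 y ↔
      (x = y ∨ (2^k < ddist R 1 x ∧ 2^k < ddist R 1 y)) := by
  intro k
  induction k with
  | zero =>
    intro x y
    have hc : ∀ z : G, (z ∈ S → c 1 z = some z) ∧ (z ∉ S → c 1 z = none) := by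
      intro z
      constructor
      · intro hz
        have := hc1 1 z (by simpa using hz)
        simpa using this
      · intro hz
        exact hc2 1 z (by simpa using hz)
    have hd : ∀ z : G, z ∈ S ↔ ddist R 1 z ≤ 1 := fun z => ddist_one_mem he hinv hgen hR
    show c 1 x = c 1 y ↔ _
    rw [pow_zero]
    by_cases hx : x ∈ S <;> by_cases hy : y ∈ S
    · rw [(hc x).1 hx, (hc y).1 hy]
      have hdx : ¬ (1 < ddist R 1 x) := by have := (hd x).mp hx; omega
      simp only [Option.some.injEq]
      constructor
      · exact fun h => Or.inl h
      · rintro (h | ⟨h1, h2⟩)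
        · exact h
        · exact absurd h1 hdx
    · rw [(hc x).1 hx, (hc y).2 hy]
      have hdx : ¬ (1 < ddist R 1 x) := by have := (hd x).mp hx; omega
      constructor
      · intro h; cases h
      · rintro (rfl | ⟨h1, h2⟩)
        · exact absurd hx hy
        · exact absurd h1 hdx
    · rw [(hc x).2 hx, (hc y).1 hy]
      have hdy : ¬ (1 < ddist R 1 y) := by have := (hd y).mp hy; omega
      constructor
      · intro h; cases h
      · rintro (rfl | ⟨h1, h2⟩)
        · exact absurd hy hx
        · exact absurd h2 hdy
    · rw [(hc x).2 hx, (hc y).2 hy]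
      have hdx : 1 < ddist R 1 x := Nat.not_le.mp fun h => hx ((hd x).mpr h)
      have hdy : 1 < ddist R 1 y := Nat.not_le.mp fun h => hy ((hd y).mpr h)
      exact ⟨fun _ => Or.inr ⟨hdx, hdy⟩, fun _ => rfl⟩
  | succ k ih =>
    intro x y
    have hrw : ∀ w z : G, WLiter c k w z = WLiter c k 1 (z * w⁻¹) := fun w z =>
      WLiter_conj c hc1 hc2 k w z
    have hpow : (2:ℕ)^(k+1) = 2^k + 2^k := by rw [pow_succ, Nat.mul_two]
    constructor
    · intro h
      by_cases hxy : x = y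
      · exact Or.inl hxy
      right
      have aux : ∀ x' y' : G, WLiter c (k+1) 1 x' = WLiter c (k+1) 1 y' → x' ≠ y' →
          ddist R 1 x' ≤ 2^(k+1) → False := by
        intro x' y' h' hne hx'
        obtain ⟨a, ha, hb⟩ := ddist_split he hinv hgen hR
          (x := x') (m := 2^k) (n := 2^k) (by omega)
        have h2 : (fun c₁ c₂ => Nat.card {w : G // WLiter c k 1 w = c₁ ∧ WLiter c k w x' = c₂}) =
            (fun c₁ c₂ => Nat.card {w : G // WLiter c k 1 w = c₁ ∧ WLiter c k w y' = c₂}) :=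
          congrArg Prod.snd h'
        have hcount := congrFun (congrFun h2 (WLiter c k 1 a)) (WLiter c k 1 (x' * a⁻¹))
        have hpos : 0 < Nat.card {w : G // WLiter c k 1 w = WLiter c k 1 a ∧
            WLiter c k w x' = WLiter c k 1 (x' * a⁻¹)} := by
          have hne' : Nonempty {w : G // WLiter c k 1 w = WLiter c k 1 a ∧
              WLiter c k w x' = WLiter c k 1 (x' * a⁻¹)} := ⟨⟨a, rfl, hrw a x'⟩⟩
          exact Nat.card_pos
        have hzero : Nat.card {w : G // WLiter c k 1 w = WLiter c k 1 a ∧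
            WLiter c k w y' = WLiter c k 1 (x' * a⁻¹)} = 0 := by
          have hemp : IsEmpty {w : G // WLiter c k 1 w = WLiter c k 1 a ∧
              WLiter c k w y' = WLiter c k 1 (x' * a⁻¹)} := by
            constructor
            rintro ⟨w, hw1, hw2⟩
            rcases (ih w a).mp hw1 with rfl | ⟨_, hfar⟩
            · rw [hrw] at hw2
              rcases (ih (y' * w⁻¹) (x' * w⁻¹)).mp hw2 with heq | ⟨_, hfar2⟩
              · exact hne (mul_right_cancel heq).symm
              · omega
            · omega
          exact Nat.card_of_isEmpty
        omega
      constructor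
      · by_contra hle
        exact aux x y h hxy (not_lt.mp hle)
      · by_contra hle
        exact aux y x h.symm (Ne.symm hxy) (not_lt.mp hle)
    · rintro (rfl | ⟨hx, hy⟩)
      · rfl
      show (⟨_, _⟩ : WLColor (Option G) k × (WLColor (Option G) k → WLColor (Option G) k → ℕ)) = ⟨_, _⟩
      rw [Prod.mk.injEq]
      have hmono : (2:ℕ)^k ≤ 2^(k+1) := Nat.pow_le_pow_right (by norm_num) (Nat.le_succ k)
      refine ⟨(ih x y).mpr (Or.inr ⟨lt_of_le_of_lt hmono hx, lt_of_le_of_lt hmono hy⟩), ?_⟩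
      funext c₁ c₂
      by_cases h₁ : ∃ a, WLiter c k 1 a = c₁
      · obtain ⟨a, ha⟩ := h₁
        by_cases h₂ : ddist R 1 a ≤ 2^k
        · -- ball colour c₁
          have hfarxa : 2^k < ddist R 1 (x * a⁻¹) := by
            have := ddist_sub he hinv hgen hR x a; omega
          have hfarya : 2^k < ddist R 1 (y * a⁻¹) := by
            have := ddist_sub he hinv hgen hR y a; omega
          have hfa : WLiter c k 1 (x * a⁻¹) = WLiter c k 1 (y * a⁻¹) :=
            (ih _ _).mpr (Or.inr ⟨hfarxa, hfarya⟩)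
          refine Nat.card_congr (Equiv.subtypeEquivRight fun w => ?_)
          constructor
          · rintro ⟨hw1, hw2⟩
            refine ⟨hw1, ?_⟩
            rcases (ih w a).mp (hw1.trans ha.symm) with rfl | ⟨_, hfar⟩
            · rw [hrw] at hw2 ⊢
              exact hfa.symm.trans hw2
            · omega
          · rintro ⟨hw1, hw2⟩
            refine ⟨hw1, ?_⟩
            rcases (ih w a).mp (hw1.trans ha.symm) with rfl | ⟨_, hfar⟩
            · rw [hrw] at hw2 ⊢
              exact hfa.trans hw2
            · omega
        · -- far colour c₁
          push_neg at h₂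
          by_cases h₃ : ∃ b, WLiter c k 1 b = c₂
          · obtain ⟨b, hb⟩ := h₃
            by_cases h₄ : ddist R 1 b ≤ 2^k
            · -- singleton case
              have key : ∀ z : G, 2^(k+1) < ddist R 1 z →
                  Nat.card {w : G // WLiter c k 1 w = c₁ ∧ WLiter c k w z = c₂} = 1 := by
                intro z hz
                rw [Nat.card_eq_one_iff_unique]
                have huniq : ∀ u : G, WLiter c k u z = c₂ → u = b⁻¹ * z := by
                  intro u hu
                  rw [hrw] at hu
                  rcases (ih (z * u⁻¹) b).mp (hu.trans hb.symm) with heq | ⟨_, hfar⟩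
                  · rw [← heq]; group
                  · omega
                constructor
                · constructor
                  rintro ⟨w, hw1, hw2⟩ ⟨w', hw1', hw2'⟩
                  exact Subtype.ext ((huniq w hw2).trans (huniq w' hw2').symm)
                · refine ⟨⟨b⁻¹ * z, ?_, ?_⟩⟩
                  · rw [← ha]
                    refine (ih _ _).mpr (Or.inr ⟨?_, h₂⟩)
                    have h5 := ddist_sub he hinv hgen hR z (b⁻¹ * z)
                    have h6 : z * (b⁻¹ * z)⁻¹ = b := by group
                    rw [h6] at h5
                    omega
                  · rw [hrw]
                    have h6 : z * (b⁻¹ * z)⁻¹ = b := by group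
                    rw [h6, hb]
              rw [key x hx, key y hy]
            · -- far-far counting case
              push_neg at h₄
              have hset : ∀ z : G, 2^(k+1) < ddist R 1 z →
                  {w : G | WLiter c k 1 w = c₁ ∧ WLiter c k w z = c₂} =
                    ({w : G | ddist R 1 w ≤ 2^k} ∪ {w : G | ddist R 1 (z * w⁻¹) ≤ 2^k})ᶜ := by
                intro z hz
                ext w
                simp only [Set.mem_setOf_eq, Set.mem_compl_iff, Set.mem_union, not_or, not_le]
                constructor
                · rintro ⟨hw1, hw2⟩
                  constructor
                  · rcases (ih w a).mp (hw1.trans ha.symm) with rfl | ⟨hf, _⟩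
                    · exact h₂
                    · exact hf
                  · rw [hrw] at hw2
                    rcases (ih (z * w⁻¹) b).mp (hw2.trans hb.symm) with heq | ⟨hf, _⟩
                    · rw [heq]; exact h₄
                    · exact hf
                · rintro ⟨hw1, hw2⟩
                  refine ⟨ha ▸ (ih w a).mpr (Or.inr ⟨hw1, h₂⟩), ?_⟩
                  rw [hrw]
                  exact hb ▸ (ih _ b).mpr (Or.inr ⟨hw2, h₄⟩)
              have hcard : ∀ z : G, 2^(k+1) < ddist R 1 z →
                  Nat.card {w : G // WLiter c k 1 w = c₁ ∧ WLiter c k w z = c₂} =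
                    Nat.card G - ({w : G | ddist R 1 w ≤ 2^k}.ncard +
                      {w : G | ddist R 1 w ≤ 2^k}.ncard) := by
                intro z hz
                have e0 : Nat.card {w : G // WLiter c k 1 w = c₁ ∧ WLiter c k w z = c₂} =
                    ({w : G | WLiter c k 1 w = c₁ ∧ WLiter c k w z = c₂}).ncard :=
                  Nat.card_coe_set_eq _
                rw [e0, hset z hz]
                set B := {w : G | ddist R 1 w ≤ 2^k} with hB
                set Cz := {w : G | ddist R 1 (z * w⁻¹) ≤ 2^k} with hC
                have hdisj : Disjoint B Cz := by
                  rw [Set.disjoint_left]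
                  intro w hwB hwC
                  have := ddist_sub he hinv hgen hR z w
                  simp only [hB, hC, Set.mem_setOf_eq] at hwB hwC
                  omega
                have hCcard : Cz.ncard = B.ncard := by
                  have himg : Cz = (fun u => u⁻¹ * z) '' B := by
                    ext w
                    simp only [hB, hC, Set.mem_setOf_eq, Set.mem_image]
                    constructor
                    · intro hw
                      exact ⟨z * w⁻¹, hw, by group⟩
                    · rintro ⟨u, hu, rfl⟩
                      have h6 : z * (u⁻¹ * z)⁻¹ = u := by group
                      rw [h6]; exact hu
                  have hinj : Function.Injective (fun u : G => u⁻¹ * z) := by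
                    intro u v huv
                    simpa using inv_injective (mul_right_cancel huv)
                  rw [himg, Set.ncard_image_of_injective _ hinj]
                have hcompl := Set.ncard_add_ncard_compl (B ∪ Cz)
                rw [Set.ncard_union_eq hdisj] at hcompl
                omega
              rw [hcard x hx, hcard y hy]
          · -- c₂ not realised
            have hem : ∀ z : G, IsEmpty {w : G // WLiter c k 1 w = c₁ ∧ WLiter c k w z = c₂} := by
              intro z
              constructor
              rintro ⟨w, _, hw2⟩
              rw [hrw] at hw2
              exact h₃ ⟨z * w⁻¹, hw2⟩
            have := hem x
            have := hem y
            rw [Nat.card_of_isEmpty, Nat.card_of_isEmpty]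
      · -- c₁ not realised
        have hem : ∀ z : G, IsEmpty {w : G // WLiter c k 1 w = c₁ ∧ WLiter c k w z = c₂} := by
          intro z
          constructor
          rintro ⟨w, hw1, _⟩
          exact h₁ ⟨w, hw1⟩
        have := hem x
        have := hem y
        rw [Nat.card_of_isEmpty, Nat.card_of_isEmpty]

end Main
section Final

variable {G : Type*} [Group G] [Finite G] {S : Set G} {R : G → G → Prop}
variable {c : G → G → Option G}
variable (he : (1 : G) ∈ S) (hinv : S⁻¹ = S)
variable (hgen : Subgroup.closure S = ⊤)
variable (hc1 : ∀ g₁ g₂ : G, g₂ * g₁⁻¹ ∈ S → c g₁ g₂ = some (g₂ * g₁⁻¹))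
variable (hc2 : ∀ g₁ g₂ : G, g₂ * g₁⁻¹ ∉ S → c g₁ g₂ = none)
variable (hR : ∀ g h : G, R g h ↔ ∃ s ∈ S, h = s * g)

set_option linter.unusedSectionVars false

include he hinv hgen hc1 hc2 hR

lemma ddist_le_ddiam_s17 (x : G) : ddist R 1 x ≤ ddiam R :=
  le_csSup (Set.finite_range _).bddAbove ⟨(1, x), rfl⟩

lemma exists_ddiam : ∃ x : G, ddist R 1 x = ddiam R := by
  have hne : (Set.range fun p : G × G => ddist R p.1 p.2).Nonempty := ⟨_, ⟨(1, 1), rfl⟩⟩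
  obtain ⟨⟨g, h⟩, hp⟩ := Nat.sSup_mem hne (Set.finite_range _).bddAbove
  exact ⟨h * g⁻¹, by rw [← ddist_eq he hinv hgen hR]; exact hp⟩

lemma stab_iff (k : ℕ) :
    (∀ v₁ v₂ u₁ u₂ : G, WLiter c (k+1) v₁ v₂ = WLiter c (k+1) u₁ u₂ ↔
        WLiter c k v₁ v₂ = WLiter c k u₁ u₂) ↔
      Set.Subsingleton {x : G | 2^k < ddist R 1 x} := by
  have hmain := WL_main he hinv hgen hc1 hc2 hR
  have hpow : (2:ℕ)^(k+1) = 2^k + 2^k := by rw [pow_succ, Nat.mul_two]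
  have hone : (1:ℕ) ≤ 2^k := Nat.one_le_two_pow
  constructor
  · intro hs x hx y hy
    simp only [Set.mem_setOf_eq] at hx hy
    by_contra hxy
    have hk : WLiter c k 1 x = WLiter c k 1 y := (hmain k x y).mpr (Or.inr ⟨hx, hy⟩)
    have hk1 := (hs 1 x 1 y).mpr hk
    rcases (hmain (k+1) x y).mp hk1 with rfl | ⟨hfx, _⟩
    · exact hxy rfl
    · obtain ⟨z, hz⟩ := ddist_exists_eq he hinv hgen hR
        (x := x) (m := 2^k + 1) (by omega)
      have hzx : z ≠ x := fun h => by rw [h] at hz; omega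
      have hkz : WLiter c k 1 z = WLiter c k 1 x :=
        (hmain k z x).mpr (Or.inr ⟨by omega, hx⟩)
      have hkz1 := (hs 1 z 1 x).mpr hkz
      rcases (hmain (k+1) z x).mp hkz1 with h | ⟨hfz, _⟩
      · exact hzx h
      · omega
  · intro hsub v₁ v₂ u₁ u₂
    rw [WLiter_conj c hc1 hc2 (k+1) v₁ v₂, WLiter_conj c hc1 hc2 (k+1) u₁ u₂,
      WLiter_conj c hc1 hc2 k v₁ v₂, WLiter_conj c hc1 hc2 k u₁ u₂,
      hmain (k+1), hmain k]
    constructor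
    · rintro (h | ⟨h1, h2⟩)
      · exact Or.inl h
      · exact Or.inr ⟨by omega, by omega⟩
    · rintro (h | ⟨h1, h2⟩)
      · exact Or.inl h
      · exact Or.inl (hsub h1 h2)

end Final


/-- Exact number of nontrivial Weisfeiler-Leman iterations for a Cayley graph:
`⌈log₂(diam − 1)⌉` if every vertex has a unique vertex at maximal distance, and
`⌈log₂ diam⌉` otherwise. -/
theorem WL_cayley_exact {G : Type*} [Group G] [Finite G]
    (S : Set G) (he : (1 : G) ∈ S) (hinv : S⁻¹ = S)
    (hgen : Subgroup.closure S = ⊤)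
    (c : G → G → Option G)
    (hc1 : ∀ g₁ g₂ : G, g₂ * g₁⁻¹ ∈ S → c g₁ g₂ = some (g₂ * g₁⁻¹))
    (hc2 : ∀ g₁ g₂ : G, g₂ * g₁⁻¹ ∉ S → c g₁ g₂ = none)
    (R : G → G → Prop) (hR : ∀ g h : G, R g h ↔ ∃ s ∈ S, h = s * g) :
    ((∀ g : G, ∃! g' : G, ddist R g g' = ddiam R) →
        WLnum c = Nat.clog 2 (ddiam R - 1)) ∧
    (¬ (∀ g : G, ∃! g' : G, ddist R g g' = ddiam R) →
        WLnum c = Nat.clog 2 (ddiam R)) := by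
  have hone : ∀ k : ℕ, (1:ℕ) ≤ 2^k := fun k => Nat.one_le_two_pow
  have hWL : ∀ M : ℕ, (∀ k : ℕ, Set.Subsingleton {x : G | 2^k < ddist R 1 x} ↔ M ≤ 2^k) →
      WLnum c = Nat.clog 2 M := by
    intro M hM
    have hset : {k : ℕ | ∀ v₁ v₂ u₁ u₂ : G,
        WLiter c (k + 1) v₁ v₂ = WLiter c (k + 1) u₁ u₂ ↔
          WLiter c k v₁ v₂ = WLiter c k u₁ u₂} = Set.Ici (Nat.clog 2 M) := by
      ext k
      rw [Set.mem_setOf_eq, stab_iff he hinv hgen hc1 hc2 hR k, hM k, Set.mem_Ici,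
        Nat.clog_le_iff_le_pow (by norm_num : (1:ℕ) < 2)]
    rw [WLnum, hset, csInf_Ici]
  constructor
  · intro hU
    obtain ⟨x₀, hx₀, huniq⟩ := hU 1
    refine hWL (ddiam R - 1) fun k => ?_
    constructor
    · intro hsub
      by_contra hlt
      push_neg at hlt
      obtain ⟨z, hz⟩ := ddist_exists_eq he hinv hgen hR
        (x := x₀) (m := 2^k + 1) (by rw [hx₀]; omega)
      have hzT : z ∈ {x : G | 2^k < ddist R 1 x} := by
        simp only [Set.mem_setOf_eq]; omega
      have hxT : x₀ ∈ {x : G | 2^k < ddist R 1 x} := by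
        simp only [Set.mem_setOf_eq, hx₀]; omega
      have := hsub hzT hxT
      rw [this, hx₀] at hz
      rw [hz, Nat.add_sub_cancel] at hlt
      exact lt_irrefl _ hlt
    · intro hge x hx y hy
      simp only [Set.mem_setOf_eq] at hx hy
      have hxd : ddist R 1 x = ddiam R := by
        have h1 := ddist_le_ddiam_s17 he hinv hgen hc1 hc2 hR (R := R) x
        have h2 := hone k
        omega
      have hyd : ddist R 1 y = ddiam R := by
        have h1 := ddist_le_ddiam_s17 he hinv hgen hc1 hc2 hR (R := R) y
        have h2 := hone k
        omega
      rw [huniq x hxd, huniq y hyd]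
  · intro hnU
    have htwo : ∃ x y : G, x ≠ y ∧ ddist R 1 x = ddiam R ∧ ddist R 1 y = ddiam R := by
      by_contra hcon
      push_neg at hcon
      obtain ⟨x₀, hx₀⟩ := exists_ddiam he hinv hgen hc1 hc2 hR (R := R)
      refine hnU fun g => ⟨x₀ * g, ?_, ?_⟩
      · show ddist R g (x₀ * g) = ddiam R
        rw [ddist_eq he hinv hgen hR]
        simpa using hx₀
      · intro g'' hg''
        rw [ddist_eq he hinv hgen hR] at hg''
        have : g'' * g⁻¹ = x₀ := by
          by_contra hne
          exact (hcon _ _ hne hg'' hx₀) -- hcon : ∀ x y, x ≠ y → ¬(_ ∧ _)? check shape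
        rw [← this]; group
    obtain ⟨x, y, hxy, hxd, hyd⟩ := htwo
    refine hWL (ddiam R) fun k => ?_
    constructor
    · intro hsub
      by_contra hlt
      push_neg at hlt
      exact hxy (hsub (by simp only [Set.mem_setOf_eq, hxd]; omega)
        (by simp only [Set.mem_setOf_eq, hyd]; omega))
    · intro hge z hz w hw
      simp only [Set.mem_setOf_eq] at hz hw
      have := ddist_le_ddiam_s17 he hinv hgen hc1 hc2 hR (R := R) z
      omega
end
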